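/- Let R be a commutative ring and G a filter of ideals of R possessing a basis of finitely generated ideals. Then G is a Gabriel topology (i.e., for all I in G and t in R the colon ideal (I : t) is in G, and whenever J is an ideal and I in G satisfies (J : t) in G for all t in I, then J in G) if and only if G is closed under products of ideals. -/

import Mathlib

lemma my_finset_inf_mem {R α : Type*} [CommRing R] (G : Set (Ideal R)) (htop : ⊤ ∈ G)
    (hinter : ∀ I ∈ G, ∀ J ∈ G, I ⊓ J ∈ G) (s : Finset α) (f : α → Ideal R)
    (hf : ∀ a ∈ s, f a ∈ G) : s.inf f ∈ G := by
  classical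
  induction s using Finset.induction_on with
  | empty => simpa using htop
  | insert _ _ hns ih =>
    rw [Finset.inf_insert]
    exact hinter _ (hf _ (Finset.mem_insert_self _ _)) _
      (ih fun a ha => hf a (Finset.mem_insert_of_mem ha))

/-- For a commutative ring `R` and a filter `G` of ideals of `R`
(with a basis of finitely generated ideals), `G` is a Gabriel topology iff it
is closed under products of ideals. Here `(I : t)` is `I.colon (span {t})`. -/
theorem gabriel_iff_closed_under_products {R : Type*} [CommRing R]
    (G : Set (Ideal R))
    (hne : G.Nonempty)
    (hup : ∀ I ∈ G, ∀ J : Ideal R, I ≤ J → J ∈ G)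
    (hinter : ∀ I ∈ G, ∀ J ∈ G, I ⊓ J ∈ G)
    (hbasis : ∀ I ∈ G, ∃ J ∈ G, J ≤ I ∧ J.FG) :
    ((∀ I ∈ G, ∀ t : R, I.colon (Ideal.span {t}) ∈ G) ∧
      (∀ J : Ideal R, ∀ I ∈ G, (∀ t ∈ I, J.colon (Ideal.span {t}) ∈ G) → J ∈ G))
      ↔ (∀ I ∈ G, ∀ J ∈ G, I * J ∈ G) := by
  constructor
  · rintro ⟨h1, h2⟩ I hI J hJ
    refine h2 (I * J) I hI fun t ht => hup J hJ _ fun j hj => ?_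
    rw [Ideal.mem_colon_span_singleton, mul_comm j t]
    exact Ideal.mul_mem_mul ht hj
  · intro hprod
    have htop : ⊤ ∈ G := by
      obtain ⟨I0, hI0⟩ := hne
      exact hup I0 hI0 ⊤ le_top
    constructor
    · intro I hI t
      exact hup I hI _ fun r hr =>
        Ideal.mem_colon_span_singleton.mpr (I.mul_mem_right t hr)
    · intro J I hI hcol
      obtain ⟨K, hKG, hKI, s, hs⟩ := hbasis I hI
      set L : Ideal R := s.inf (fun t => J.colon (Ideal.span {t})) with hL
      have hLG : L ∈ G :=
        my_finset_inf_mem G htop hinter s _ fun t ht =>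
          hcol t (hKI (hs ▸ Ideal.subset_span ht))
      have hKL : K * L ≤ J := by
        rw [Ideal.mul_le]
        intro k hk l hl
        rw [← hs] at hk
        induction hk using Submodule.span_induction with
        | mem t htm =>
          have hle : L ≤ J.colon (Ideal.span {t}) := Finset.inf_le htm
          have : l ∈ J.colon (Ideal.span {t}) := hle hl
          rw [Ideal.mem_colon_span_singleton] at this
          rwa [mul_comm]
        | zero => simp
        | add x y _ _ hx hy => rw [add_mul]; exact J.add_mem hx hy
        | smul r x _ hx => rw [smul_eq_mul, mul_assoc]; exact J.mul_mem_left r hx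
      exact hup (K * L) (hprod K hKG L hLG) J hKL
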